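/- Let ρ be a probability measure on ℝ^d with finite second moment, and θ₁,…,θ_m distinct points. Define, for each j, ṽ_j = ρ({x : ‖θ_j − x‖ ≤ ‖θ_k − x‖ for all k}) using any fixed tie-breaking rule that assigns each x to exactly one nearest index, and v_j = ṽ_j (so ∑ v_j = 1). Then W₂²(∑_j v_j δ_{θ_j}, ρ) = E_{X∼ρ}[min_j ‖θ_j − X‖²], i.e., the nearest-neighbor weights achieve the optimal weights. -/

import Mathlib

open MeasureTheory

/-- Squared 2-Wasserstein distance on `ℝ^d` (Euclidean). -/
noncomputable def W2sq {d : ℕ}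
    (μ ρ : Measure (EuclideanSpace ℝ (Fin d))) : ℝ :=
  sInf { c : ℝ |
    ∃ γ : Measure (EuclideanSpace ℝ (Fin d) × EuclideanSpace ℝ (Fin d)),
      γ.map Prod.fst = μ ∧ γ.map Prod.snd = ρ ∧
      c = ∫ p, ‖p.1 - p.2‖ ^ 2 ∂γ }

/-- The discrete measure `∑ j v_j δ_{θ_j}`. -/
noncomputable def discMeasure {d m : ℕ} (v : Fin m → ℝ)
    (θ : Fin m → EuclideanSpace ℝ (Fin d)) :
    Measure (EuclideanSpace ℝ (Fin d)) :=
  ∑ j, ENNReal.ofReal (v j) • Measure.dirac (θ j)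

/-- Nearest-neighbor (Voronoi) weights achieve the optimal weights:
    with `c` a measurable tie-breaking rule assigning each `x` to exactly one nearest
    centroid, and `v_j = ρ(c⁻¹{j})`, one has
    `W₂²(∑ v_j δ_{θ_j}, ρ) = E_{X∼ρ}[min_j ‖θ_j − X‖²]`. -/
theorem stmt1 {d m : ℕ} (hm : 0 < m)
    (ρ : Measure (EuclideanSpace ℝ (Fin d))) [IsProbabilityMeasure ρ]
    (hmom : Integrable (fun x => ‖x‖ ^ 2) ρ)
    (θ : Fin m → EuclideanSpace ℝ (Fin d)) (hθ : Function.Injective θ)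
    (c : EuclideanSpace ℝ (Fin d) → Fin m) (hc : Measurable c)
    (hnear : ∀ x, ∀ k, ‖θ (c x) - x‖ ≤ ‖θ k - x‖) :
    W2sq (discMeasure (fun j => (ρ (c ⁻¹' {j})).toReal) θ) ρ
      = ∫ x, ⨅ j, ‖θ j - x‖ ^ 2 ∂ρ := by
  classical
  haveI hne : Nonempty (Fin m) := ⟨⟨0, hm⟩⟩
  set μ : Measure (EuclideanSpace ℝ (Fin d)) := discMeasure (fun j => (ρ (c ⁻¹' {j})).toReal) θ with hμ
  set f : EuclideanSpace ℝ (Fin d) → ℝ := fun x => ⨅ j, ‖θ j - x‖ ^ 2 with hfdef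
  set I : ℝ := ∫ x, f x ∂ρ with hI
  -- basic facts about f
  have hbdd : ∀ x : EuclideanSpace ℝ (Fin d), BddBelow (Set.range fun j => ‖θ j - x‖ ^ 2) :=
    fun x => (Set.finite_range _).bddBelow
  have hf_le : ∀ (x : EuclideanSpace ℝ (Fin d)) (j : Fin m), f x ≤ ‖θ j - x‖ ^ 2 := fun x j => ciInf_le (hbdd x) j
  have hf_nonneg : ∀ x : EuclideanSpace ℝ (Fin d), 0 ≤ f x := fun x => le_ciInf fun j => by positivity
  have hf_eq : ∀ x, f x = ‖θ (c x) - x‖ ^ 2 := by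
    intro x
    refine le_antisymm (hf_le x (c x)) (le_ciInf fun j => ?_)
    exact pow_le_pow_left₀ (norm_nonneg _) (hnear x j) 2
  have hf_meas : Measurable f :=
    Measurable.iInf fun j => ((continuous_const.sub continuous_id).norm.pow 2).measurable
  obtain ⟨M, hM⟩ : ∃ M : ℝ, ∀ j, ‖θ j‖ ≤ M := Finite.exists_le _
  have hsub : ∀ (a x : EuclideanSpace ℝ (Fin d)), ‖a - x‖ ^ 2 ≤ 2 * ‖a‖ ^ 2 + 2 * ‖x‖ ^ 2 := by
    intro a x
    have h1 := norm_sub_le a x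
    have h2 : ‖a - x‖ ^ 2 ≤ (‖a‖ + ‖x‖) ^ 2 := by
      have := pow_le_pow_left₀ (norm_nonneg _) h1 2
      simpa using this
    nlinarith [sq_nonneg (‖a‖ - ‖x‖)]
  -- integrability of f over ρ
  have hg_int : Integrable (fun x : EuclideanSpace ℝ (Fin d) => 2 * M ^ 2 + 2 * ‖x‖ ^ 2) ρ :=
    (integrable_const _).add (hmom.const_mul 2)
  have hf_int : Integrable f ρ := by
    refine hg_int.mono' hf_meas.aestronglyMeasurable (Filter.Eventually.of_forall fun x => ?_)
    rw [Real.norm_eq_abs, abs_of_nonneg (hf_nonneg x)]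
    calc f x ≤ ‖θ (Classical.arbitrary (Fin m)) - x‖ ^ 2 := hf_le x _
      _ ≤ 2 * ‖θ (Classical.arbitrary (Fin m))‖ ^ 2 + 2 * ‖x‖ ^ 2 := hsub _ _
      _ ≤ 2 * M ^ 2 + 2 * ‖x‖ ^ 2 := by
          have h0 := hM (Classical.arbitrary (Fin m))
          nlinarith [norm_nonneg (θ (Classical.arbitrary (Fin m)))]
  -- the transport map
  have hθc : Measurable fun x => θ (c x) := (measurable_of_countable θ).comp hc
  have hT : Measurable fun x : EuclideanSpace ℝ (Fin d) => (θ (c x), x) := hθc.prodMk measurable_id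
  -- membership: I is attained by the coupling induced by the Voronoi map
  have hmem : I ∈ { b : ℝ |
      ∃ γ : Measure (EuclideanSpace ℝ (Fin d) × EuclideanSpace ℝ (Fin d)), γ.map Prod.fst = μ ∧ γ.map Prod.snd = ρ ∧
        b = ∫ p, ‖p.1 - p.2‖ ^ 2 ∂γ } := by
    refine ⟨ρ.map (fun x => (θ (c x), x)), ?_, ?_, ?_⟩
    · rw [Measure.map_map measurable_fst hT]
      have : (Prod.fst ∘ fun x : EuclideanSpace ℝ (Fin d) => (θ (c x), x)) = fun x => θ (c x) := rfl
      rw [this]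
      ext s hs
      rw [Measure.map_apply hθc hs, hμ, discMeasure, Measure.finset_sum_apply]
      have hpre : (fun x => θ (c x)) ⁻¹' s
          = ⋃ j ∈ Finset.univ.filter (fun j => θ j ∈ s), c ⁻¹' {j} := by
        ext x
        simp [Set.mem_preimage, Set.mem_iUnion]
      rw [hpre, measure_biUnion_finset ?_ (fun j _ => hc (measurableSet_singleton j))]
      · rw [Finset.sum_filter]
        refine Finset.sum_congr rfl fun j _ => ?_
        rw [Measure.smul_apply, Measure.dirac_apply' _ hs, smul_eq_mul,
          ENNReal.ofReal_toReal (measure_ne_top ρ _), Set.indicator_apply]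
        by_cases hj : θ j ∈ s <;> simp [hj]
      · intro j _ k _ hjk
        exact (Set.disjoint_singleton.2 hjk).preimage c
    · rw [Measure.map_map measurable_snd hT]
      exact Measure.map_id
    · rw [integral_map hT.aemeasurable (f := fun p : EuclideanSpace ℝ (Fin d) × EuclideanSpace ℝ (Fin d) => ‖p.1 - p.2‖ ^ 2)
        ((continuous_fst.sub continuous_snd).norm.pow 2).aestronglyMeasurable]
      simp only [hI]
      exact integral_congr_ae (Filter.Eventually.of_forall fun x => hf_eq x)
  -- lower bound: every coupling cost is at least I
  have hlb : ∀ b ∈ { b : ℝ |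
      ∃ γ : Measure (EuclideanSpace ℝ (Fin d) × EuclideanSpace ℝ (Fin d)), γ.map Prod.fst = μ ∧ γ.map Prod.snd = ρ ∧
        b = ∫ p, ‖p.1 - p.2‖ ^ 2 ∂γ }, I ≤ b := by
    rintro b ⟨γ, h1, h2, rfl⟩
    haveI : IsProbabilityMeasure γ := by
      constructor
      have h3 := Measure.map_apply (μ := γ) measurable_snd MeasurableSet.univ
      rw [h2, measure_univ, Set.preimage_univ] at h3
      exact h3.symm
    have hR : MeasurableSet (Set.range θ) := (Set.finite_range θ).measurableSet
    have hae : ∀ᵐ p ∂γ, p.1 ∈ Set.range θ := by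
      have hzero : γ (Prod.fst ⁻¹' (Set.range θ)ᶜ) = 0 := by
        have : γ (Prod.fst ⁻¹' (Set.range θ)ᶜ) = γ.map Prod.fst (Set.range θ)ᶜ := by
          rw [Measure.map_apply measurable_fst hR.compl]
        rw [this, h1, hμ, discMeasure, Measure.finset_sum_apply]
        refine Finset.sum_eq_zero fun j _ => ?_
        rw [Measure.smul_apply, Measure.dirac_apply' _ hR.compl, smul_eq_mul]
        simp [Set.indicator_apply]
      rw [ae_iff]
      exact hzero
    have h2snd : Integrable (fun p : EuclideanSpace ℝ (Fin d) × EuclideanSpace ℝ (Fin d) => ‖p.2‖ ^ 2) γ := by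
      have h4 : Integrable (fun x : EuclideanSpace ℝ (Fin d) => ‖x‖ ^ 2) (γ.map Prod.snd) := by
        rw [h2]; exact hmom
      exact (integrable_map_measure h4.aestronglyMeasurable
        measurable_snd.aemeasurable).mp h4
    have hgγ : Integrable (fun p : EuclideanSpace ℝ (Fin d) × EuclideanSpace ℝ (Fin d) => 2 * M ^ 2 + 2 * ‖p.2‖ ^ 2) γ :=
      (integrable_const _).add (h2snd.const_mul 2)
    have hcost_meas : Measurable fun p : EuclideanSpace ℝ (Fin d) × EuclideanSpace ℝ (Fin d) => ‖p.1 - p.2‖ ^ 2 :=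
      ((continuous_fst.sub continuous_snd).norm.pow 2).measurable
    have hcost_int : Integrable (fun p : EuclideanSpace ℝ (Fin d) × EuclideanSpace ℝ (Fin d) => ‖p.1 - p.2‖ ^ 2) γ := by
      refine hgγ.mono' hcost_meas.aestronglyMeasurable ?_
      filter_upwards [hae] with p hp
      obtain ⟨j, hj⟩ := hp
      rw [Real.norm_eq_abs, abs_of_nonneg (by positivity)]
      calc ‖p.1 - p.2‖ ^ 2 ≤ 2 * ‖p.1‖ ^ 2 + 2 * ‖p.2‖ ^ 2 := hsub _ _
        _ ≤ 2 * M ^ 2 + 2 * ‖p.2‖ ^ 2 := by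
            have := hM j
            rw [hj] at this
            nlinarith [norm_nonneg p.1]
    have hfsnd_int : Integrable (fun p : EuclideanSpace ℝ (Fin d) × EuclideanSpace ℝ (Fin d) => f p.2) γ := by
      have h4 : Integrable f (γ.map Prod.snd) := by rw [h2]; exact hf_int
      exact (integrable_map_measure h4.aestronglyMeasurable
        measurable_snd.aemeasurable).mp h4
    have hle : ∫ p, f p.2 ∂γ ≤ ∫ p, ‖p.1 - p.2‖ ^ 2 ∂γ := by
      refine integral_mono_ae hfsnd_int hcost_int ?_
      filter_upwards [hae] with p hp
      obtain ⟨j, hj⟩ := hp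
      calc f p.2 ≤ ‖θ j - p.2‖ ^ 2 := hf_le _ j
        _ = ‖p.1 - p.2‖ ^ 2 := by rw [hj]
    have heq : ∫ p, f p.2 ∂γ = I := by
      rw [hI, ← h2, integral_map measurable_snd.aemeasurable hf_meas.aestronglyMeasurable]
    linarith [heq ▸ hle]
  -- conclude
  rw [W2sq]
  exact le_antisymm (csInf_le ⟨I, hlb⟩ hmem) (le_csInf ⟨I, hmem⟩ hlb)
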